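/- Let χ be a primitive, even, quadratic Dirichlet character modulo f with f > 1 (so χ² = 1, χ ≠ 1, χ(−1) = 1, and the conductor of χ equals f). Then the derivative of the Dirichlet L-function of χ at s = 0 is nonzero: L'(0, χ) ≠ 0; i.e. L(s,χ) has a simple zero at s = 0. -/

import Mathlib

open DirichletCharacter Complex Filter Topology

/-- The Gauss sum of a primitive Dirichlet character (to the standard additive character)
is nonzero. -/
lemma aux_gaussSum_ne_zero (f : ℕ) [NeZero f] (χ : DirichletCharacter ℂ f)
    (hprim : χ.IsPrimitive) : gaussSum χ ZMod.stdAddChar ≠ 0 := by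
  intro h
  have h1 : ∀ k, ZMod.dft (⇑χ) k = 0 := by
    intro k
    rw [show ZMod.dft (⇑χ) k = χ⁻¹ (-k) * gaussSum χ ZMod.stdAddChar from
      hprim.fourierTransform_eq_inv_mul_gaussSum k, h, mul_zero]
  have h2 : (⇑χ : ZMod f → ℂ) = 0 := by
    have := ZMod.dft.injective (a₁ := (⇑χ : ZMod f → ℂ)) (a₂ := 0)
    apply this
    ext k
    simp [h1 k]
  have := congrFun h2 1
  simp at this

/-- The derivative of `(Gammaℝ ·)⁻¹` at `0` is `1 / 2`. -/
lemma aux_deriv_inv_Gammaℝ_zero : deriv (fun s : ℂ ↦ (Gammaℝ s)⁻¹) 0 = 1 / 2 := by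
  have hdiff : DifferentiableAt ℂ (fun s : ℂ ↦ (Gammaℝ s)⁻¹) 0 :=
    differentiable_Gammaℝ_inv 0
  have hG0 : (Gammaℝ (0 : ℂ))⁻¹ = 0 := by
    rw [Gammaℝ_eq_zero_iff.mpr ⟨0, by simp⟩, inv_zero]
  have hslope : Tendsto (fun s : ℂ ↦ (Gammaℝ s)⁻¹ / s) (𝓝[≠] 0)
      (𝓝 (deriv (fun s : ℂ ↦ (Gammaℝ s)⁻¹) 0)) := by
    have := hasDerivAt_iff_tendsto_slope.mp hdiff.hasDerivAt
    refine this.congr' ?_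
    filter_upwards [self_mem_nhdsWithin] with s hs
    simp [slope_def_field, hG0, div_eq_mul_inv]
  have hslope' : Tendsto (fun s : ℂ ↦ (Gammaℝ s)⁻¹ / s) (𝓝[≠] 0) (𝓝 (1 / 2)) := by
    have h2 : Tendsto (fun s : ℂ ↦ s * Gammaℝ s) (𝓝[≠] 0) (𝓝 2) := Gammaℝ_residue_zero
    have h3 := h2.inv₀ (by norm_num : (2:ℂ) ≠ 0)
    have h4 : Tendsto (fun s : ℂ ↦ (Gammaℝ s)⁻¹ / s) (𝓝[≠] 0) (𝓝 (2:ℂ)⁻¹) := by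
      refine h3.congr' ?_
      filter_upwards [self_mem_nhdsWithin] with s hs
      rw [mul_inv, div_eq_mul_inv, mul_comm]
    simpa [one_div] using h4
  exact tendsto_nhds_unique hslope hslope'

/-- If `χ` is a primitive, even, quadratic Dirichlet character modulo `f` with `f > 1`,
then `L'(0, χ) ≠ 0`, i.e. `L(s,χ)` has a simple zero at `s = 0`. -/
theorem deriv_LFunction_zero_ne_zero_of_primitive_even_quadratic
    (f : ℕ) (hf : 1 < f) (χ : DirichletCharacter ℂ f)
    (hquad : χ ^ 2 = 1) (hne : χ ≠ 1) (heven : χ.Even) (hprim : χ.IsPrimitive) :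
    haveI : NeZero f := ⟨by omega⟩
    deriv χ.LFunction 0 ≠ 0 := by
  haveI : NeZero f := ⟨by omega⟩
  have hf1 : f ≠ 1 := by omega
  -- L(s) = Λ(s) * (Gammaℝ s)⁻¹ globally
  have hL : χ.LFunction = fun s ↦ completedLFunction χ s * (Gammaℝ s)⁻¹ := by
    ext s
    rw [LFunction_eq_completed_div_gammaFactor χ s (Or.inr hf1), heven.gammaFactor_def,
      div_eq_mul_inv]
  have hΛdiff : Differentiable ℂ (completedLFunction χ) :=
    differentiable_completedLFunction hne
  have hG0 : (Gammaℝ (0 : ℂ))⁻¹ = 0 := by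
    rw [Gammaℝ_eq_zero_iff.mpr ⟨0, by simp⟩, inv_zero]
  have hderiv : deriv χ.LFunction 0 = completedLFunction χ 0 * (1 / 2) := by
    rw [hL, deriv_fun_mul (hΛdiff 0) (differentiable_Gammaℝ_inv 0), hG0, mul_zero, zero_add,
      aux_deriv_inv_Gammaℝ_zero]
  rw [hderiv]
  -- now show Λ(0) ≠ 0 via the functional equation
  have hinv : χ⁻¹ = χ := inv_eq_of_mul_eq_one_right (by rw [← sq, hquad])
  have hΛ1 : completedLFunction χ 1 ≠ 0 := by
    intro h
    apply LFunction_apply_one_ne_zero hne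
    rw [hL]
    simp [h]
  have hFE := hprim.completedLFunction_one_sub 1
  rw [sub_self, hinv] at hFE
  have hf0 : (f : ℂ) ≠ 0 := Nat.cast_ne_zero.mpr (by omega)
  have hN : (f : ℂ) ^ ((1 : ℂ) - 1 / 2) ≠ 0 := by
    simp [cpow_eq_zero_iff, hf0]
  have hroot : rootNumber χ ≠ 0 := by
    rw [rootNumber]
    apply div_ne_zero
    · apply div_ne_zero (aux_gaussSum_ne_zero f χ hprim)
      · exact pow_ne_zero _ I_ne_zero
    · simp [cpow_eq_zero_iff, Nat.cast_ne_zero.mpr (show f ≠ 0 by omega)]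
  rw [hFE]
  exact mul_ne_zero (mul_ne_zero (mul_ne_zero hN hroot) hΛ1) (by norm_num)
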